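/- Let $c_1, c_2 \in \mathbb{R}_{\geq 0}^k$ be capacity vectors of two stars on the same terminal set $[k]$ that strongly agree, i.e., for all disjoint $A, B \subseteq [k]$: $c_1(A) \leq c_1(B)$ if and only if $c_2(A) \leq c_2(B)$. Let $d \in \mathbb{R}_{\geq 0}^{[k] \times [k]}$ be a symmetric demand with $d(i,i) = 0$ such that $\sum_j d(i,j) \leq c_1(i) + c_2(i)$ for all $i$. Then there exist symmetric demands $d_1, d_2 \geq 0$ with $d_1 + d_2 = d$, $\sum_j d_1(i,j) \leq c_1(i)$ for all $i$, and $\sum_j d_2(i,j) \leq c_2(i)$ for all $i$. -/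

import Mathlib

open Finset

noncomputable def Phi {k : ℕ} (L U : Fin k → ℝ) (d : Fin k → Fin k → ℝ) (y : Fin k → ℝ) (t : ℝ) : ℝ :=
  (∑ i, if t ≤ y i then L i else 0) - (∑ i, if y i ≤ -t then U i else 0)
    - (1/2) * ∑ i, ∑ j, d i j *
      max 0 (((if t ≤ y i then (1:ℝ) else 0) - (if y i ≤ -t then (1:ℝ) else 0)) +
             ((if t ≤ y j then (1:ℝ) else 0) - (if y j ≤ -t then (1:ℝ) else 0)))

lemma sigma_split (Pi' Ni Pj Nj : Prop) [Decidable Pi'] [Decidable Ni] [Decidable Pj] [Decidable Nj]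
    (hi : ¬(Pi' ∧ Ni)) (hj : ¬(Pj ∧ Nj)) :
    max 0 (((if Pi' then (1:ℝ) else 0) - (if Ni then (1:ℝ) else 0)) +
      ((if Pj then (1:ℝ) else 0) - (if Nj then (1:ℝ) else 0))) =
    (if Pi' then (1:ℝ) else 0) * (1 - (if Nj then (1:ℝ) else 0)) +
      (if Pj then (1:ℝ) else 0) * (1 - (if Ni then (1:ℝ) else 0)) := by
  split_ifs <;> simp_all <;> norm_num [max_def]

lemma phi_nonpos {k : ℕ} (c1 c2 : Fin k → ℝ) (h1 : ∀ i, 0 ≤ c1 i) (h2 : ∀ i, 0 ≤ c2 i)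
    (hsa : ∀ A B : Finset (Fin k), Disjoint A B →
      ((∑ i ∈ A, c1 i ≤ ∑ i ∈ B, c1 i) ↔ (∑ i ∈ A, c2 i ≤ ∑ i ∈ B, c2 i)))
    (d : Fin k → Fin k → ℝ) (hd : ∀ i j, 0 ≤ d i j)
    (hsym : ∀ i j, d i j = d j i)
    (hcap : ∀ i, ∑ j, d i j ≤ c1 i + c2 i)
    (y : Fin k → ℝ) (t : ℝ) (ht : 0 < t) :
    Phi (fun i => (∑ j, d i j) - c1 i) c2 d y t ≤ 0 := by
  classical
  set p : Fin k → ℝ := fun i => if t ≤ y i then (1:ℝ) else 0 with hp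
  set q : Fin k → ℝ := fun i => if y i ≤ -t then (1:ℝ) else 0 with hq
  set g : Fin k → ℝ := fun i => ∑ j, d i j * q j with hg
  have hpq : ∀ i, ¬((t ≤ y i) ∧ (y i ≤ -t)) := by
    intro i ⟨h1', h2'⟩; linarith
  -- rewrite the double sum
  have hdouble : ∀ i j, d i j *
      max 0 (((if t ≤ y i then (1:ℝ) else 0) - (if y i ≤ -t then (1:ℝ) else 0)) +
             ((if t ≤ y j then (1:ℝ) else 0) - (if y j ≤ -t then (1:ℝ) else 0)))
      = d i j * (p i * (1 - q j)) + d i j * (p j * (1 - q i)) := by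
    intro i j
    rw [sigma_split _ _ _ _ (hpq i) (hpq j)]
    simp only [hp, hq]; ring
  have hswap : ∑ i, ∑ j, d i j * (p j * (1 - q i)) = ∑ i, ∑ j, d i j * (p i * (1 - q j)) := by
    rw [Finset.sum_comm]
    exact Finset.sum_congr rfl fun a _ => Finset.sum_congr rfl fun b _ => by rw [hsym]
  have hinner : ∀ i, ∑ j, d i j * (p i * (1 - q j)) = p i * ((∑ j, d i j) - g i) := by
    intro i
    have e : (∑ j, d i j) - g i = ∑ j, (d i j - d i j * q j) := by
      rw [hg]; dsimp only; rw [Finset.sum_sub_distrib]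
    rw [e, Finset.mul_sum]
    exact Finset.sum_congr rfl fun j _ => by ring
  have hPhi : Phi (fun i => (∑ j, d i j) - c1 i) c2 d y t
      = (∑ i, p i * (g i - c1 i)) - ∑ i, q i * c2 i := by
    rw [Phi]
    have e0 : ∀ (r : Fin k → ℝ) (c : Fin k → Prop) [DecidablePred c],
        (∑ i, if c i then r i else 0) = ∑ i, (if c i then (1:ℝ) else 0) * r i := by
      intro r c _
      exact Finset.sum_congr rfl fun i _ => by split_ifs <;> ring
    rw [e0, e0]
    have e1 : ∑ i, ∑ j, d i j *
      max 0 (((if t ≤ y i then (1:ℝ) else 0) - (if y i ≤ -t then (1:ℝ) else 0)) +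
             ((if t ≤ y j then (1:ℝ) else 0) - (if y j ≤ -t then (1:ℝ) else 0)))
        = 2 * ∑ i, p i * ((∑ j, d i j) - g i) := by
      calc ∑ i, ∑ j, d i j *
          max 0 (((if t ≤ y i then (1:ℝ) else 0) - (if y i ≤ -t then (1:ℝ) else 0)) +
                 ((if t ≤ y j then (1:ℝ) else 0) - (if y j ≤ -t then (1:ℝ) else 0)))
          = ∑ i, ∑ j, (d i j * (p i * (1 - q j)) + d i j * (p j * (1 - q i))) :=
            Finset.sum_congr rfl fun i _ => Finset.sum_congr rfl fun j _ => hdouble i j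
        _ = (∑ i, ∑ j, d i j * (p i * (1 - q j))) + ∑ i, ∑ j, d i j * (p j * (1 - q i)) := by
            rw [← Finset.sum_add_distrib]
            exact Finset.sum_congr rfl fun i _ => Finset.sum_add_distrib
        _ = 2 * ∑ i, ∑ j, d i j * (p i * (1 - q j)) := by rw [hswap]; ring
        _ = 2 * ∑ i, p i * ((∑ j, d i j) - g i) := by
            rw [Finset.sum_congr rfl fun i _ => hinner i]
      
    rw [e1]
    rw [← Finset.sum_sub_distrib, ← Finset.sum_sub_distrib]
    rw [Finset.mul_sum, Finset.mul_sum, ← Finset.sum_sub_distrib]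
    exact Finset.sum_congr rfl fun i _ => by ring
  rw [hPhi]
  -- now the combinatorial argument
  set P' : Finset (Fin k) := univ.filter (fun i => t ≤ y i ∧ c1 i < g i) with hP'
  set N : Finset (Fin k) := univ.filter (fun i => y i ≤ -t) with hN
  have hq0 : ∀ i, 0 ≤ q i := by intro i; rw [hq]; dsimp only; split_ifs <;> norm_num
  have hq1 : ∀ i, q i ≤ 1 := by intro i; rw [hq]; dsimp only; split_ifs <;> norm_num
  have hgD : ∀ i, g i ≤ ∑ j, d i j := by
    intro i
    exact Finset.sum_le_sum fun j _ => by
      calc d i j * q j ≤ d i j * 1 := mul_le_mul_of_nonneg_left (hq1 j) (hd i j)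
        _ = d i j := mul_one _
  have hg0 : ∀ i, 0 ≤ g i := fun i => Finset.sum_nonneg fun j _ => mul_nonneg (hd i j) (hq0 j)
  have step1 : (∑ i, p i * (g i - c1 i)) ≤ ∑ i ∈ P', (g i - c1 i) := by
    rw [hP', Finset.sum_filter]
    refine Finset.sum_le_sum fun i _ => ?_
    by_cases h1' : t ≤ y i
    · by_cases h2' : c1 i < g i
      · rw [if_pos ⟨h1', h2'⟩, hp]; dsimp only; rw [if_pos h1', one_mul]
      · rw [if_neg (by tauto), hp]; dsimp only; rw [if_pos h1', one_mul]; linarith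
    · rw [if_neg (by tauto), hp]; dsimp only; rw [if_neg h1', zero_mul]
  have hqc : ∀ c : Fin k → ℝ, ∑ i, q i * c i = ∑ i ∈ N, c i := by
    intro c
    rw [hN, Finset.sum_filter]
    exact Finset.sum_congr rfl fun i _ => by rw [hq]; dsimp only; split_ifs <;> ring
  have hqc2 := hqc c2
  -- suffices
  have main : ∑ i ∈ P', (g i - c1 i) ≤ ∑ i ∈ N, c2 i := by
    by_contra hcon
    push_neg at hcon
    have hGsplit : ∑ i ∈ P', (g i - c1 i) = (∑ i ∈ P', g i) - ∑ i ∈ P', c1 i :=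
      Finset.sum_sub_distrib _ _
    -- bound 1 : ∑_{P'} g ≤ ∑_{P'} (c1+c2)
    have b1 : ∑ i ∈ P', g i ≤ (∑ i ∈ P', c1 i) + ∑ i ∈ P', c2 i := by
      rw [← Finset.sum_add_distrib]
      exact Finset.sum_le_sum fun i _ => le_trans (hgD i) (hcap i)
    -- bound 2 : ∑_{P'} g ≤ ∑_{N} (c1+c2)
    have b2 : ∑ i ∈ P', g i ≤ (∑ i ∈ N, c1 i) + ∑ i ∈ N, c2 i := by
      have e1 : ∑ i ∈ P', g i = ∑ j, q j * ∑ i ∈ P', d i j := by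
        rw [hg]; dsimp only
        rw [Finset.sum_comm]
        refine Finset.sum_congr rfl fun j _ => ?_
        rw [Finset.mul_sum]
        exact Finset.sum_congr rfl fun i _ => by ring
      have e2 : ∀ j, q j * ∑ i ∈ P', d i j ≤ q j * (c1 j + c2 j) := by
        intro j
        refine mul_le_mul_of_nonneg_left ?_ (hq0 j)
        calc ∑ i ∈ P', d i j ≤ ∑ i, d i j := Finset.sum_le_sum_of_subset_of_nonneg (Finset.subset_univ _) (fun i _ _ => hd i j)
          _ = ∑ i, d j i := Finset.sum_congr rfl fun i _ => hsym i j
          _ ≤ c1 j + c2 j := hcap j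
      calc ∑ i ∈ P', g i = ∑ j, q j * ∑ i ∈ P', d i j := e1
        _ ≤ ∑ j, q j * (c1 j + c2 j) := Finset.sum_le_sum fun j _ => e2 j
        _ = (∑ j, q j * c1 j) + ∑ j, q j * c2 j := by
            rw [← Finset.sum_add_distrib]; exact Finset.sum_congr rfl fun j _ => by ring
        _ = (∑ i ∈ N, c1 i) + ∑ i ∈ N, c2 i := by rw [hqc c1, hqc c2]
    have hdisj : Disjoint P' N := by
      rw [Finset.disjoint_left]
      intro a ha hb
      rw [hP', Finset.mem_filter] at ha
      rw [hN, Finset.mem_filter] at hb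
      linarith [ha.2.1, hb.2]
    have hc1le : ∑ i ∈ P', c1 i ≤ ∑ i ∈ N, c1 i := by linarith
    have hc2le : ∑ i ∈ P', c2 i ≤ ∑ i ∈ N, c2 i := (hsa P' N hdisj).mp hc1le
    linarith
  linarith [step1, hqc2, main]

lemma aux1 (a m : ℝ) (hm : 0 < m) (hma : a ≠ 0 → m ≤ |a|) :
    (0 < a ∧ m ≤ a ∧ (if 0 < a then a - m else if a < 0 then a + m else 0) = a - m ∧
      ((if m ≤ a then (1:ℝ) else 0) - (if a ≤ -m then (1:ℝ) else 0)) = 1)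
    ∨ (a = 0 ∧ (if 0 < a then a - m else if a < 0 then a + m else 0) = 0 ∧
      ((if m ≤ a then (1:ℝ) else 0) - (if a ≤ -m then (1:ℝ) else 0)) = 0)
    ∨ (a < 0 ∧ a ≤ -m ∧ (if 0 < a then a - m else if a < 0 then a + m else 0) = a + m ∧
      ((if m ≤ a then (1:ℝ) else 0) - (if a ≤ -m then (1:ℝ) else 0)) = -1) := by
  rcases lt_trichotomy a 0 with h | h | h
  · have ham : a ≤ -m := by
      have := hma (ne_of_lt h); rw [abs_of_neg h] at this; linarith
    right; right
    refine ⟨h, ham, ?_, ?_⟩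
    · rw [if_neg (by linarith), if_pos h]
    · rw [if_neg (by linarith), if_pos ham]; ring
  · right; left
    subst h
    refine ⟨rfl, ?_, ?_⟩
    · rw [if_neg (by linarith), if_neg (by linarith)]
    · rw [if_neg (by linarith), if_neg (by linarith)]; ring
  · have ham : m ≤ a := by
      have := hma (ne_of_gt h); rwa [abs_of_pos h] at this
    left
    refine ⟨h, ham, ?_, ?_⟩
    · rw [if_pos h]
    · rw [if_pos ham, if_neg (by linarith)]; ring

lemma acase (a m L U : ℝ) (hm : 0 < m) (hma : a ≠ 0 → m ≤ |a|) :
    a * (if 0 ≤ a then L else U) =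
    (if 0 < a then a - m else if a < 0 then a + m else 0) *
      (if 0 ≤ (if 0 < a then a - m else if a < 0 then a + m else 0) then L else U)
    + m * ((if m ≤ a then L else 0) - (if a ≤ -m then U else 0)) := by
  rcases lt_trichotomy a 0 with h | h | h
  · have ham : a ≤ -m := by
      have := hma (ne_of_lt h); rw [abs_of_neg h] at this; linarith
    rw [if_neg (not_le.mpr h), if_neg (not_lt.mpr h.le), if_pos h, if_neg (by linarith : ¬ m ≤ a),
      if_pos ham]
    rcases lt_or_eq_of_le (by linarith : a + m ≤ 0) with h2 | h2
    · rw [if_neg (not_le.mpr h2)]; ring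
    · rw [if_pos (le_of_eq h2.symm)]
      have : a = -m := by linarith
      rw [this]; ring
  · subst h
    rw [if_pos le_rfl, if_neg (lt_irrefl 0), if_neg (lt_irrefl 0), if_pos le_rfl,
      if_neg (by linarith), if_neg (by linarith)]
    ring
  · have ham : m ≤ a := by
      have := hma (ne_of_gt h); rwa [abs_of_pos h] at this
    rw [if_pos h.le, if_pos h, if_pos (by linarith : (0:ℝ) ≤ a - m), if_pos ham,
      if_neg (by linarith : ¬ a ≤ -m)]
    ring

lemma bcase (a b m : ℝ) (hm : 0 < m) (hma : a ≠ 0 → m ≤ |a|) (hmb : b ≠ 0 → m ≤ |b|) :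
    max 0 (a + b) =
    max 0 ((if 0 < a then a - m else if a < 0 then a + m else 0) +
           (if 0 < b then b - m else if b < 0 then b + m else 0))
    + m * max 0 (((if m ≤ a then (1:ℝ) else 0) - (if a ≤ -m then (1:ℝ) else 0)) +
                 ((if m ≤ b then (1:ℝ) else 0) - (if b ≤ -m then (1:ℝ) else 0))) := by
  rcases aux1 a m hm hma with ⟨ha0, ham, ha', hea⟩ | ⟨ha0, ha', hea⟩ | ⟨ha0, ham, ha', hea⟩ <;>
    rcases aux1 b m hm hmb with ⟨hb0, hbm, hb', heb⟩ | ⟨hb0, hb', heb⟩ | ⟨hb0, hbm, hb', heb⟩ <;>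
      rw [ha', hb', hea, heb]
  · rw [max_eq_right (by linarith : (0:ℝ) ≤ a + b),
      max_eq_right (by linarith : (0:ℝ) ≤ a - m + (b - m)),
      max_eq_right (by norm_num : (0:ℝ) ≤ 1 + 1)]
    ring
  · subst hb0
    rw [max_eq_right (by linarith : (0:ℝ) ≤ a + 0),
      max_eq_right (by linarith : (0:ℝ) ≤ a - m + 0),
      max_eq_right (by norm_num : (0:ℝ) ≤ 1 + 0)]
    ring
  · rw [show a - m + (b + m) = a + b by ring,
      max_eq_left (by norm_num : (1:ℝ) + -1 ≤ 0)]
    ring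
  · subst ha0
    rw [max_eq_right (by linarith : (0:ℝ) ≤ 0 + b),
      max_eq_right (by linarith : (0:ℝ) ≤ 0 + (b - m)),
      max_eq_right (by norm_num : (0:ℝ) ≤ 0 + 1)]
    ring
  · subst ha0; subst hb0
    norm_num
  · subst ha0
    rw [max_eq_left (by linarith : 0 + b ≤ 0),
      max_eq_left (by linarith : 0 + (b + m) ≤ 0),
      max_eq_left (by norm_num : (0:ℝ) + -1 ≤ 0)]
    ring
  · rw [show a + m + (b - m) = a + b by ring,
      max_eq_left (by norm_num : (-1:ℝ) + 1 ≤ 0)]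
    ring
  · subst hb0
    rw [max_eq_left (by linarith : a + 0 ≤ 0),
      max_eq_left (by linarith : a + m + 0 ≤ 0),
      max_eq_left (by norm_num : (-1:ℝ) + 0 ≤ 0)]
    ring
  · rw [max_eq_left (by linarith : a + b ≤ 0),
      max_eq_left (by linarith : a + m + (b + m) ≤ 0),
      max_eq_left (by norm_num : (-1:ℝ) + -1 ≤ 0)]
    ring

lemma layercake {k : ℕ} (L U : Fin k → ℝ) (d : Fin k → Fin k → ℝ) :
    ∀ (n : ℕ) (y : Fin k → ℝ), (univ.filter fun i => y i ≠ 0).card ≤ n →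
    (∀ t : ℝ, 0 < t → Phi L U d y t ≤ 0) →
    ∑ i, y i * (if 0 ≤ y i then L i else U i)
      - (1/2) * ∑ i, ∑ j, d i j * max 0 (y i + y j) ≤ 0 := by
  intro n
  induction n with
  | zero =>
    intro y hcard hphi
    have hy : ∀ i, y i = 0 := by
      intro i
      by_contra hne
      have hmem : i ∈ univ.filter fun i => y i ≠ 0 := by simp [hne]
      have := Finset.card_pos.mpr ⟨i, hmem⟩
      omega
    simp [hy]
  | succ n ih =>
    intro y hcard hphi
    by_cases hz : ∀ i, y i = 0
    · simp [hz]
    · push_neg at hz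
      obtain ⟨iw, hiw⟩ := hz
      set S : Finset ℝ := (univ.filter fun i => y i ≠ 0).image fun i => |y i| with hS
      have hSne : S.Nonempty := ⟨|y iw|, by rw [hS]; exact Finset.mem_image_of_mem _ (by simp [hiw])⟩
      set m := S.min' hSne with hm
      have hmmem : m ∈ S := S.min'_mem hSne
      obtain ⟨i0, hi0a, hi0b⟩ : ∃ i0, y i0 ≠ 0 ∧ |y i0| = m := by
        rw [hS] at hmmem
        obtain ⟨i0, hmem, heq⟩ := Finset.mem_image.mp hmmem
        exact ⟨i0, (Finset.mem_filter.mp hmem).2, heq⟩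
      have hmpos : 0 < m := hi0b ▸ abs_pos.mpr hi0a
      have hmle : ∀ i, y i ≠ 0 → m ≤ |y i| := fun i hi =>
        S.min'_le _ (by rw [hS]; exact Finset.mem_image_of_mem _ (by simp [hi]))
      set y' : Fin k → ℝ := fun i => if 0 < y i then y i - m else if y i < 0 then y i + m else 0 with hy'
      have hz0 : ∀ i, y i = 0 → y' i = 0 := by
        intro i h; rw [hy']; dsimp only; rw [h]; norm_num
      have hy'i0 : y' i0 = 0 := by
        rw [hy']; dsimp only
        rcases lt_trichotomy (y i0) 0 with h | h | h
        · rw [if_neg (not_lt.mpr h.le), if_pos h]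
          rw [abs_of_neg h] at hi0b; linarith
        · exact absurd h hi0a
        · rw [if_pos h]; rw [abs_of_pos h] at hi0b; linarith
      have hcard' : (univ.filter fun i => y' i ≠ 0).card ≤ n := by
        have hsub : (univ.filter fun i => y' i ≠ 0) ⊆ (univ.filter fun i => y i ≠ 0).erase i0 := by
          intro i hi
          rw [Finset.mem_filter] at hi
          rw [Finset.mem_erase, Finset.mem_filter]
          refine ⟨?_, Finset.mem_univ i, ?_⟩
          · rintro rfl; exact hi.2 hy'i0
          · intro h0; exact hi.2 (hz0 i h0)
        have hle1 := Finset.card_le_card hsub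
        have h2 : i0 ∈ univ.filter fun i => y i ≠ 0 := by simp [hi0a]
        rw [Finset.card_erase_of_mem h2] at hle1
        omega
      have hphi' : ∀ t : ℝ, 0 < t → Phi L U d y' t ≤ 0 := by
        intro t ht
        have hiff1 : ∀ i, (t ≤ y' i) ↔ (t + m ≤ y i) := by
          intro i
          rw [hy']; dsimp only
          rcases lt_trichotomy (y i) 0 with h | h | h
          · have hym : y i ≤ -m := by
              have := hmle i (ne_of_lt h); rw [abs_of_neg h] at this; linarith
            rw [if_neg (not_lt.mpr h.le), if_pos h]
            constructor <;> intro <;> linarith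
          · rw [h, if_neg (lt_irrefl (0:ℝ)), if_neg (lt_irrefl (0:ℝ))]
            constructor <;> intro <;> linarith
          · have hym : m ≤ y i := by
              have := hmle i (ne_of_gt h); rwa [abs_of_pos h] at this
            rw [if_pos h]
            constructor <;> intro <;> linarith
        have hiff2 : ∀ i, (y' i ≤ -t) ↔ (y i ≤ -(t + m)) := by
          intro i
          rw [hy']; dsimp only
          rcases lt_trichotomy (y i) 0 with h | h | h
          · have hym : y i ≤ -m := by
              have := hmle i (ne_of_lt h); rw [abs_of_neg h] at this; linarith
            rw [if_neg (not_lt.mpr h.le), if_pos h]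
            constructor <;> intro <;> linarith
          · rw [h, if_neg (lt_irrefl (0:ℝ)), if_neg (lt_irrefl (0:ℝ))]
            constructor <;> intro <;> linarith
          · have hym : m ≤ y i := by
              have := hmle i (ne_of_gt h); rwa [abs_of_pos h] at this
            rw [if_pos h]
            constructor <;> intro <;> linarith
        have e1 : ∀ i, (if t ≤ y' i then L i else 0) = (if t + m ≤ y i then L i else 0) :=
          fun i => if_congr (hiff1 i) rfl rfl
        have e2 : ∀ i, (if y' i ≤ -t then U i else 0) = (if y i ≤ -(t + m) then U i else 0) :=
          fun i => if_congr (hiff2 i) rfl rfl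
        have e3 : ∀ i, (if t ≤ y' i then (1:ℝ) else 0) = (if t + m ≤ y i then (1:ℝ) else 0) :=
          fun i => if_congr (hiff1 i) rfl rfl
        have e4 : ∀ i, (if y' i ≤ -t then (1:ℝ) else 0) = (if y i ≤ -(t + m) then (1:ℝ) else 0) :=
          fun i => if_congr (hiff2 i) rfl rfl
        have heq : Phi L U d y' t = Phi L U d y (t + m) := by
          rw [Phi, Phi]
          simp only [e1, e2, e3, e4]
        rw [heq]
        exact hphi (t + m) (by linarith)
      have htarget := ih y' hcard' hphi'
      have hphim := hphi m hmpos
      rw [Phi] at hphim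
      have hA : ∑ i, y i * (if 0 ≤ y i then L i else U i)
          = (∑ i, y' i * (if 0 ≤ y' i then L i else U i))
            + m * ((∑ i, if m ≤ y i then L i else 0) - (∑ i, if y i ≤ -m then U i else 0)) := by
        simp only [hy']
        rw [Finset.sum_congr rfl fun i (_ : i ∈ univ) =>
          acase (y i) m (L i) (U i) hmpos (hmle i), Finset.sum_add_distrib]
        congr 1
        rw [← Finset.mul_sum, Finset.sum_sub_distrib]
      have hB : ∑ i, ∑ j, d i j * max 0 (y i + y j)
          = (∑ i, ∑ j, d i j * max 0 (y' i + y' j))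
            + m * ∑ i, ∑ j, d i j *
              max 0 (((if m ≤ y i then (1:ℝ) else 0) - (if y i ≤ -m then (1:ℝ) else 0)) +
                     ((if m ≤ y j then (1:ℝ) else 0) - (if y j ≤ -m then (1:ℝ) else 0))) := by
        simp only [hy']
        have e : ∀ i j, d i j * max 0 (y i + y j)
            = d i j * max 0 ((if 0 < y i then y i - m else if y i < 0 then y i + m else 0) +
                (if 0 < y j then y j - m else if y j < 0 then y j + m else 0)) + m * (d i j *
              max 0 (((if m ≤ y i then (1:ℝ) else 0) - (if y i ≤ -m then (1:ℝ) else 0)) +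
                     ((if m ≤ y j then (1:ℝ) else 0) - (if y j ≤ -m then (1:ℝ) else 0)))) := by
          intro i j
          rw [bcase (y i) (y j) m hmpos (hmle i) (hmle j)]
          ring
        rw [Finset.sum_congr rfl fun i (_ : i ∈ univ) => Finset.sum_congr rfl fun j (_ : j ∈ univ) => e i j]
        rw [Finset.sum_congr rfl fun i (_ : i ∈ univ) => Finset.sum_add_distrib, Finset.sum_add_distrib]
        congr 1
        rw [Finset.mul_sum]
        exact Finset.sum_congr rfl fun i _ => by rw [Finset.mul_sum]
      rw [hA, hB]
      have hmul := mul_le_mul_of_nonneg_left hphim hmpos.le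
      rw [mul_zero] at hmul
      nlinarith [htarget, hmul]

theorem stmt7 (k : ℕ) (c1 c2 : Fin k → ℝ) (h1 : ∀ i, 0 ≤ c1 i) (h2 : ∀ i, 0 ≤ c2 i)
    (hsa : ∀ A B : Finset (Fin k), Disjoint A B →
      ((∑ i ∈ A, c1 i ≤ ∑ i ∈ B, c1 i) ↔ (∑ i ∈ A, c2 i ≤ ∑ i ∈ B, c2 i)))
    (d : Fin k → Fin k → ℝ) (hd : ∀ i j, 0 ≤ d i j)
    (hsym : ∀ i j, d i j = d j i) (hdiag : ∀ i, d i i = 0)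
    (hcap : ∀ i, ∑ j, d i j ≤ c1 i + c2 i) :
    ∃ d1 d2 : Fin k → Fin k → ℝ,
      (∀ i j, 0 ≤ d1 i j) ∧ (∀ i j, 0 ≤ d2 i j) ∧
      (∀ i j, d1 i j = d1 j i) ∧ (∀ i j, d2 i j = d2 j i) ∧
      (∀ i j, d1 i j + d2 i j = d i j) ∧
      (∀ i, ∑ j, d1 i j ≤ c1 i) ∧ (∀ i, ∑ j, d2 i j ≤ c2 i) := by
  classical
  have key : ∃ x : Fin k → Fin k → ℝ, (∀ i j, x i j = x j i) ∧ (∀ i j, 0 ≤ x i j) ∧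
      (∀ i j, x i j ≤ d i j) ∧ (∀ i, (∑ j, d i j) - c1 i ≤ ∑ j, x i j) ∧
      (∀ i, ∑ j, x i j ≤ c2 i) := by
    by_contra hcon
    -- the linear row-sum map
    set rmap : (Fin k → Fin k → ℝ) →ₗ[ℝ] (Fin k → ℝ) :=
      { toFun := fun x i => ∑ j, x i j
        map_add' := by intro a b; funext i; exact Finset.sum_add_distrib
        map_smul' := by
          intro c a; funext i
          simp only [Pi.smul_apply, smul_eq_mul, RingHom.id_apply]
          exact (Finset.mul_sum _ _ _).symm } with hrmap
    set K : Set (Fin k → Fin k → ℝ) :=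
      Set.Icc 0 d ∩ {x | ∀ i j, x i j = x j i} with hK
    set box : Set (Fin k → ℝ) := Set.Icc (fun i => (∑ j, d i j) - c1 i) c2 with hbox
    have hKcompact : IsCompact K := by
      apply IsCompact.inter_right isCompact_Icc
      have : {x : Fin k → Fin k → ℝ | ∀ i j, x i j = x j i}
          = ⋂ i, ⋂ j, {x : Fin k → Fin k → ℝ | x i j = x j i} := by
        ext x; simp [Set.mem_iInter]
      rw [this]
      exact isClosed_iInter fun i => isClosed_iInter fun j =>
        isClosed_eq ((continuous_apply j).comp (continuous_apply i))
          ((continuous_apply i).comp (continuous_apply j))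
    have hKconv : Convex ℝ K := by
      apply (convex_Icc _ _).inter
      intro a ha b hb s t hs ht hst
      intro i j
      simp only [Pi.add_apply, Pi.smul_apply, smul_eq_mul]
      rw [ha i j, hb i j]
    have hscompact : IsCompact (rmap '' K) :=
      hKcompact.image rmap.continuous_of_finiteDimensional
    have hsconv : Convex ℝ (rmap '' K) := hKconv.linear_image rmap
    have hboxconv : Convex ℝ box := convex_Icc _ _
    have hboxclosed : IsClosed box := isClosed_Icc
    have hdisj : Disjoint (rmap '' K) box := by
      rw [Set.disjoint_left]
      rintro w ⟨x, hxK, rfl⟩ hwbox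
      rw [hK] at hxK
      obtain ⟨hxIcc, hxsym⟩ := hxK
      rw [Set.mem_Icc] at hxIcc
      rw [hbox, Set.mem_Icc] at hwbox
      exact hcon ⟨x, hxsym, fun i j => hxIcc.1 i j, fun i j => hxIcc.2 i j,
        fun i => hwbox.1 i, fun i => hwbox.2 i⟩
    obtain ⟨f, u, v, hfs, huv, hft⟩ :=
      geometric_hahn_banach_compact_closed hsconv hscompact hboxconv hboxclosed hdisj
    set y : Fin k → ℝ := fun i => f (fun j => if i = j then 1 else 0) with hy
    have hfexp : ∀ w : Fin k → ℝ, f w = ∑ i, w i * y i := by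
      intro w
      conv_lhs => rw [pi_eq_sum_univ w]
      rw [map_sum]
      exact Finset.sum_congr rfl fun i _ => by rw [f.map_smul, smul_eq_mul, hy]
    set xstar : Fin k → Fin k → ℝ := fun i j => if 0 < y i + y j then d i j else 0 with hxst
    have hxsym : ∀ i j, xstar i j = xstar j i := by
      intro i j; rw [hxst]; dsimp only; rw [hsym i j, add_comm (y i) (y j)]
    have hxK : xstar ∈ K := by
      rw [hK]
      constructor
      · rw [Set.mem_Icc]
        constructor
        · rw [Pi.le_def]; intro i; rw [Pi.le_def]; intro j
          rw [hxst]; dsimp only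
          split_ifs
          · exact hd i j
          · exact le_rfl
        · rw [Pi.le_def]; intro i; rw [Pi.le_def]; intro j
          rw [hxst]; dsimp only
          split_ifs
          · exact le_rfl
          · exact hd i j
      · exact hxsym
    set zstar : Fin k → ℝ := fun i => if 0 ≤ y i then (∑ j, d i j) - c1 i else c2 i with hz
    have hzbox : zstar ∈ box := by
      rw [hbox, Set.mem_Icc]
      constructor
      · rw [Pi.le_def]; intro i
        rw [hz]; dsimp only
        split_ifs
        · exact le_rfl
        · have := hcap i; linarith
      · rw [Pi.le_def]; intro i
        rw [hz]; dsimp only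
        split_ifs
        · have := hcap i; linarith
        · exact le_rfl
    have hlt : f (rmap xstar) < f zstar :=
      lt_trans (lt_trans (hfs _ ⟨xstar, hxK, rfl⟩) huv) (hft _ hzbox)
    have hrx : f (rmap xstar) = ∑ i, (∑ j, xstar i j) * y i := by
      rw [hfexp]
      rfl
    have hsum1 : ∑ i, (∑ j, xstar i j) * y i
        = (1/2) * ∑ i, ∑ j, d i j * max 0 (y i + y j) := by
      have e1 : ∑ i, (∑ j, xstar i j) * y i = ∑ i, ∑ j, xstar i j * y i :=
        Finset.sum_congr rfl fun i _ => Finset.sum_mul _ _ _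
      have e2 : ∑ i, ∑ j, xstar i j * y i = ∑ i, ∑ j, xstar i j * y j := by
        rw [Finset.sum_comm]
        exact Finset.sum_congr rfl fun a _ => Finset.sum_congr rfl fun b _ => by rw [hxsym]
      have e3 : ∀ i j, xstar i j * y i + xstar i j * y j = d i j * max 0 (y i + y j) := by
        intro i j
        rw [hxst]; dsimp only
        by_cases h : 0 < y i + y j
        · rw [if_pos h, max_eq_right h.le]; ring
        · rw [if_neg h, max_eq_left (not_lt.mp h)]; ring
      have e4 : (∑ i, ∑ j, xstar i j * y i) + (∑ i, ∑ j, xstar i j * y j)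
          = ∑ i, ∑ j, d i j * max 0 (y i + y j) := by
        rw [← Finset.sum_add_distrib]
        refine Finset.sum_congr rfl fun i _ => ?_
        rw [← Finset.sum_add_distrib]
        exact Finset.sum_congr rfl fun j _ => e3 i j
      rw [e1]
      linarith [e2, e4]
    have hfz : f zstar = ∑ i, y i * (if 0 ≤ y i then (∑ j, d i j) - c1 i else c2 i) := by
      rw [hfexp]
      exact Finset.sum_congr rfl fun i _ => by rw [hz]; ring
    have hcard : (univ.filter fun i => y i ≠ 0).card ≤ k := by
      refine le_trans (Finset.card_filter_le _ _) ?_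
      rw [Finset.card_univ, Fintype.card_fin]
    have hlc := layercake (fun i => (∑ j, d i j) - c1 i) c2 d k y hcard
      (fun t ht => phi_nonpos c1 c2 h1 h2 hsa d hd hsym hcap y t ht)
    rw [hrx, hsum1, hfz] at hlt
    linarith
  obtain ⟨x, hxs, hx0, hxd, hlo, hhi⟩ := key
  refine ⟨fun i j => d i j - x i j, x, ?_, hx0, ?_, hxs, ?_, ?_, hhi⟩
  · intro i j; simp only [sub_nonneg]; exact hxd i j
  · intro i j; show d i j - x i j = d j i - x j i; rw [hsym i j, hxs i j]
  · intro i j; ring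
  · intro i
    have h := hlo i
    have e : ∑ j, (d i j - x i j) = (∑ j, d i j) - ∑ j, x i j := Finset.sum_sub_distrib _ _
    rw [e]; linarith
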